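/- For a perfect field F of characteristic p with a nontrivial valuation v, and r in (0,∞), the Gauss valuation v_r defined on the bounded Witt vector ring B^bd by v_r(Σ[x_n]π^n) = inf_n (v(x_n) + n·r) is multiplicative: v_r(xy) = v_r(x) + v_r(y) for all x, y in B^bd. -/

import Mathlib

set_option linter.unusedSectionVars false
set_option maxHeartbeats 1000000

open MvPolynomial Finset

namespace GaussVal



theorem ereal_cases (e : EReal) : e = ⊥ ∨ e = ⊤ ∨ ∃ u : ℝ, e = u := by
  induction e using EReal.rec with
  | bot => exact Or.inl rfl
  | coe u => exact Or.inr (Or.inr ⟨u, rfl⟩)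
  | top => exact Or.inr (Or.inl rfl)


theorem coe_nsmul' (n : ℕ) (c : ℝ) : (n • (c : EReal)) = ((n • c : ℝ) : EReal) := by
  induction n with
  | zero => simp
  | succ n ih => rw [succ_nsmul, succ_nsmul, ih, EReal.coe_add]

theorem nsmul_mono {a b : EReal} (h : a ≤ b) (n : ℕ) : n • a ≤ n • b := by
  induction n with
  | zero => simp
  | succ n ih =>
      rw [succ_nsmul, succ_nsmul]
      exact add_le_add ih h

theorem nsmul_top (n : ℕ) (hn : n ≠ 0) : n • (⊤ : EReal) = ⊤ := by
  induction n with
  | zero => omega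
  | succ n ih =>
      rw [succ_nsmul]
      rcases Nat.eq_zero_or_pos n with h | h
      · simp [h]
      · rw [ih (by omega)]
        rfl

theorem nsmul_strict {β : ℝ} {w : EReal} (h : (β : EReal) < w) {n : ℕ} (hn : n ≠ 0) :
    ((n • β : ℝ) : EReal) < n • w := by
  induction w using EReal.rec with
  | bot => exact absurd h not_lt_bot
  | coe u =>
      rw [coe_nsmul', EReal.coe_lt_coe_iff] at *
      simp only [nsmul_eq_mul]
      exact mul_lt_mul_of_pos_left h (Nat.cast_pos.mpr (Nat.pos_of_ne_zero hn))
  | top =>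
      rw [nsmul_top n hn]
      exact EReal.coe_lt_top _

theorem add_lt_add_left_real {c0 c1 : ℝ} {w z : EReal} (h : (c0 : EReal) < w)
    (h' : (c1 : EReal) ≤ z) : ((c0 + c1 : ℝ) : EReal) < w + z := by
  induction w using EReal.rec with
  | bot => exact absurd h (by simp)
  | coe u =>
      induction z using EReal.rec with
      | bot => exact absurd h' (by simp)
      | coe m =>
          rw [← EReal.coe_add, EReal.coe_lt_coe_iff] at *
          linarith [EReal.coe_le_coe_iff.mp h']
      | top =>
          rw [EReal.add_top_of_ne_bot (by simp)]
          exact EReal.coe_lt_top _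
  | top =>
      rw [EReal.top_add_of_ne_bot (fun hb => by rw [hb] at h'; exact absurd h' (by simp))]
      exact EReal.coe_lt_top _

theorem sum_coe_le {ι : Type*} (s : Finset ι) (β : ι → ℝ) (w : ι → EReal)
    (h : ∀ i ∈ s, (β i : EReal) ≤ w i) :
    ((∑ i ∈ s, β i : ℝ) : EReal) ≤ ∑ i ∈ s, w i := by
  classical
  induction s using Finset.induction_on with
  | empty => simp
  | insert a t hni ih =>
      rw [Finset.sum_insert hni, Finset.sum_insert hni, EReal.coe_add]
      exact add_le_add (h a (Finset.mem_insert_self a t))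
        (ih fun i hi => h i (Finset.mem_insert_of_mem hi))

theorem bridge {w : EReal} (hw : w ≠ ⊥) {q c t : ℝ} (hq : 0 < q) :
    ((t : EReal) ≤ w * ((q⁻¹ : ℝ) : EReal) + (c : EReal)) ↔ (((t - c) * q : ℝ) : EReal) ≤ w := by
  induction w using EReal.rec with
  | bot => exact absurd rfl hw
  | coe u =>
      rw [← EReal.coe_mul, ← EReal.coe_add, EReal.coe_le_coe_iff, EReal.coe_le_coe_iff]
      constructor
      · intro h
        have h2 : (t - c) * q ≤ u * q⁻¹ * q :=
          mul_le_mul_of_nonneg_right (by linarith) hq.le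
        rw [mul_assoc, inv_mul_cancel₀ hq.ne', mul_one] at h2
        exact h2
      · intro h
        have h2 : (t - c) * q * q⁻¹ ≤ u * q⁻¹ :=
          mul_le_mul_of_nonneg_right h (inv_pos.mpr hq).le
        rw [mul_assoc, mul_inv_cancel₀ hq.ne', mul_one] at h2
        linarith
  | top =>
      have h1 : (⊤ : EReal) * ((q⁻¹ : ℝ) : EReal) = ⊤ :=
        EReal.top_mul_of_pos (by exact_mod_cast inv_pos.mpr hq)
      rw [h1, EReal.top_add_of_ne_bot (by simp)]
      simp [le_top, EReal.coe_lt_top]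

theorem bridge_eq {w : EReal} (hw : w ≠ ⊥) {q c t : ℝ} (hq : 0 < q)
    (h : (t : EReal) = w * ((q⁻¹ : ℝ) : EReal) + (c : EReal)) :
    w = (((t - c) * q : ℝ) : EReal) := by
  induction w using EReal.rec with
  | bot => exact absurd rfl hw
  | coe u =>
      rw [← EReal.coe_mul, ← EReal.coe_add, EReal.coe_eq_coe_iff] at h
      rw [EReal.coe_eq_coe_iff]
      field_simp at h
      nlinarith [hq.ne']
  | top =>
      exfalso
      have h1 : (⊤ : EReal) * ((q⁻¹ : ℝ) : EReal) = ⊤ :=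
        EReal.top_mul_of_pos (by exact_mod_cast inv_pos.mpr hq)
      rw [h1, EReal.top_add_of_ne_bot (by simp)] at h
      exact (EReal.coe_ne_top t) h

theorem mul_inv_top {w : EReal} (hw : w ≠ ⊥) {q c : ℝ} (hq : 0 < q)
    (h : w * ((q⁻¹ : ℝ) : EReal) + (c : EReal) = ⊤) : w = ⊤ := by
  induction w using EReal.rec with
  | bot => exact absurd rfl hw
  | coe u => rw [← EReal.coe_mul, ← EReal.coe_add] at h; exact absurd h (EReal.coe_ne_top _)
  | top => rfl


section Val

variable {F : Type*} [Field F] {v : F → EReal}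
  (hv_zero : v 0 = ⊤)
  (hv_ne_bot : ∀ a : F, v a ≠ ⊥)
  (hv_mul : ∀ a b : F, v (a * b) = v a + v b)
  (hv_add : ∀ a b : F, min (v a) (v b) ≤ v (a + b))
  (hv_nontrivial : ∃ a : F, a ≠ 0 ∧ v a ≠ 0 ∧ v a ≠ ⊤)

include hv_ne_bot hv_mul hv_nontrivial in
theorem v_one : v 1 = 0 := by
  have h : v 1 = v 1 + v 1 := by rw [← hv_mul]; norm_num
  rcases ereal_cases (v 1) with h1 | h1 | ⟨u, h1⟩
  · exact absurd h1 (hv_ne_bot 1)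
  · exfalso
    obtain ⟨a, _, _, hatop⟩ := hv_nontrivial
    apply hatop
    have h2 := hv_mul a 1
    rw [mul_one, h1, EReal.add_top_of_ne_bot (hv_ne_bot a)] at h2
    exact h2
  · rw [h1, ← EReal.coe_add, EReal.coe_eq_coe_iff] at h
    have hu : u = 0 := by linarith
    rw [h1, hu]
    rfl

include hv_zero hv_ne_bot hv_mul hv_nontrivial in
theorem v_top_iff {a : F} : v a = ⊤ ↔ a = 0 := by
  constructor
  · intro h
    by_contra ha
    have h1 := hv_mul a a⁻¹
    rw [mul_inv_cancel₀ ha, v_one hv_ne_bot hv_mul hv_nontrivial, h,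
      EReal.top_add_of_ne_bot (hv_ne_bot a⁻¹)] at h1
    simp at h1
  · intro h; rw [h]; exact hv_zero

include hv_ne_bot hv_mul hv_nontrivial in
theorem v_neg (a : F) : v (-a) = v a := by
  have hm1 : v (-1 : F) = 0 := by
    have h : (0 : EReal) = v (-1) + v (-1) := by
      rw [← hv_mul, neg_mul_neg, one_mul]
      exact (v_one hv_ne_bot hv_mul hv_nontrivial).symm
    rcases ereal_cases (v (-1 : F)) with h1 | h1 | ⟨u, h1⟩
    · exact absurd h1 (hv_ne_bot _)
    · rw [h1, EReal.top_add_of_ne_bot (by simp)] at h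
      simp at h
    · rw [h1, ← EReal.coe_add] at h
      have hu : u + u = 0 := by exact_mod_cast h.symm
      rw [h1]
      norm_cast
      linarith
  have h2 := hv_mul (-1) a
  rw [neg_one_mul, hm1, zero_add] at h2
  exact h2

include hv_ne_bot hv_mul hv_add hv_nontrivial in
theorem v_add_eq {a b : F} (h : v a < v b) : v (a + b) = v a := by
  have h1 : v a ≤ v (a + b) := by
    have h0 := hv_add a b
    rwa [min_eq_left h.le] at h0
  have h2 : v (a + b) ≤ v a := by
    have h3 := hv_add (a + b) (-b)
    rw [add_neg_cancel_right, v_neg hv_ne_bot hv_mul hv_nontrivial] at h3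
    rcases le_total (v (a + b)) (v b) with hc | hc
    · rwa [min_eq_left hc] at h3
    · rw [min_eq_right hc] at h3
      exact absurd (h3.trans_lt h) (lt_irrefl _)
  exact le_antisymm h2 h1

include hv_zero hv_add in
theorem v_sum_ge {ι : Type*} (s : Finset ι) (f : ι → F) (L : EReal)
    (h : ∀ i ∈ s, L ≤ v (f i)) : L ≤ v (∑ i ∈ s, f i) := by
  classical
  induction s using Finset.induction_on with
  | empty =>
      simp only [Finset.sum_empty, hv_zero]
      exact le_top
  | insert a t hni ih =>
      rw [Finset.sum_insert hni]
      refine le_trans ?_ (hv_add _ _)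
      rw [le_min_iff]
      exact ⟨h a (Finset.mem_insert_self a t), ih fun i hi => h i (Finset.mem_insert_of_mem hi)⟩

include hv_zero hv_add in
theorem v_sum_gt {ι : Type*} (s : Finset ι) (f : ι → F) (D : ℝ)
    (h : ∀ i ∈ s, (D : EReal) < v (f i)) : (D : EReal) < v (∑ i ∈ s, f i) := by
  classical
  induction s using Finset.induction_on with
  | empty =>
      simp only [Finset.sum_empty, hv_zero]
      exact EReal.coe_lt_top D
  | insert a t hni ih =>
      rw [Finset.sum_insert hni]
      refine lt_of_lt_of_le ?_ (hv_add _ _)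
      rw [lt_min_iff]
      exact ⟨h a (Finset.mem_insert_self a t), ih fun i hi => h i (Finset.mem_insert_of_mem hi)⟩

include hv_ne_bot hv_mul hv_nontrivial in
theorem v_prod {ι : Type*} (s : Finset ι) (f : ι → F) :
    v (∏ i ∈ s, f i) = ∑ i ∈ s, v (f i) := by
  classical
  induction s using Finset.induction_on with
  | empty =>
      simp only [Finset.prod_empty, Finset.sum_empty]
      exact v_one hv_ne_bot hv_mul hv_nontrivial
  | insert a t hni ih =>
      rw [Finset.prod_insert hni, Finset.sum_insert hni, hv_mul, ih]

include hv_ne_bot hv_mul hv_nontrivial in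
theorem v_pow (a : F) (n : ℕ) : v (a ^ n) = n • v a := by
  induction n with
  | zero =>
      rw [pow_zero, zero_smul]
      exact v_one hv_ne_bot hv_mul hv_nontrivial
  | succ n ih => rw [pow_succ, hv_mul, ih, succ_nsmul]

include hv_zero hv_ne_bot hv_mul hv_nontrivial in
theorem v_root_of_unity {a : F} (m : ℕ) (hm : m ≠ 0) (ha : a ^ m = 1) : v a = 0 := by
  have h := v_pow hv_ne_bot hv_mul hv_nontrivial a m
  rw [ha, v_one hv_ne_bot hv_mul hv_nontrivial] at h
  rcases ereal_cases (v a) with h1 | h1 | ⟨u, h1⟩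
  · exact absurd h1 (hv_ne_bot _)
  · exfalso
    rw [h1, nsmul_top m hm] at h
    simp at h
  · rw [h1, coe_nsmul'] at h
    rw [h1]
    norm_cast
    have hmu : m • u = 0 := by exact_mod_cast h.symm
    rw [nsmul_eq_mul] at hmu
    rcases mul_eq_zero.mp hmu with h2 | h2
    · exact absurd (by exact_mod_cast h2) hm
    · exact h2

end Val


section Poly

variable (p : ℕ) [hp : Fact p.Prime]



theorem wh_rename {σ τ : Type*} {w : τ → ℕ} (f : σ → τ) (w' : σ → ℕ)
    (hw : ∀ s, w (f s) = w' s)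
    {φ : MvPolynomial σ ℚ} {m : ℕ} (h : IsWeightedHomogeneous w' φ m) :
    IsWeightedHomogeneous w (rename f φ) m := by
  intro d hd
  obtain ⟨u, rfl, hu⟩ := coeff_rename_ne_zero f φ d hd
  rw [← h hu]
  simp only [Finsupp.weight_apply]
  rw [Finsupp.sum_mapDomain_index (fun b => by simp) (fun b m₁ m₂ => add_smul m₁ m₂ (w b))]
  exact Finsupp.sum_congr fun s _ => by rw [hw]

theorem wh_zero_wt {σ : Type*} (φ : MvPolynomial σ ℚ) :
    IsWeightedHomogeneous (fun _ : σ => (0 : ℕ)) φ 0 := by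
  intro d _
  simp [Finsupp.weight_apply, Finsupp.sum]

theorem wh_pow {σ : Type*} {w : σ → ℕ} {φ : MvPolynomial σ ℚ} {m : ℕ}
    (h : IsWeightedHomogeneous w φ m) (k : ℕ) :
    IsWeightedHomogeneous w (φ ^ k) (k * m) := by
  induction k with
  | zero => simpa using isWeightedHomogeneous_one ℚ w
  | succ k ih =>
      have := ih.mul h
      rw [← pow_succ] at this
      convert this using 1
      ring

theorem wh_sub {σ : Type*} {w : σ → ℕ} {φ ψ : MvPolynomial σ ℚ} {m : ℕ}
    (hφ : IsWeightedHomogeneous w φ m) (hψ : IsWeightedHomogeneous w ψ m) :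
    IsWeightedHomogeneous w (φ - ψ) m := by
  intro d hd
  rw [coeff_sub] at hd
  by_cases h : coeff d φ = 0
  · exact hψ (by intro h2; rw [h, h2] at hd; simp at hd)
  · exact hφ h


theorem wh_wittPolynomial (n : ℕ) :
    IsWeightedHomogeneous (fun k : ℕ => p ^ k) (wittPolynomial p ℚ n) (p ^ n) := by
  rw [wittPolynomial]
  apply IsWeightedHomogeneous.sum
  intro i hi
  apply isWeightedHomogeneous_monomial
  rw [Finsupp.weight_apply, Finsupp.sum_single_index (by simp), smul_eq_mul, ← pow_add]
  have := mem_range.mp hi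
  congr 1
  omega

theorem wh_wittStructureRat (w : Fin 2 × ℕ → ℕ)
    (hW : ∀ n : ℕ, IsWeightedHomogeneous w
      ((rename (Prod.mk (0 : Fin 2)) (wittPolynomial p ℚ n)) *
        (rename (Prod.mk (1 : Fin 2)) (wittPolynomial p ℚ n))) (p ^ n)) :
    ∀ n, IsWeightedHomogeneous w
      (wittStructureRat p (X (0 : Fin 2) * X 1) n) (p ^ n) := by
  intro n
  induction n using Nat.strong_induction_on with
  | _ n IH =>
  rw [wittStructureRat_rec]
  have hbind : (bind₁ fun b : Fin 2 => rename (Prod.mk b) (wittPolynomial p ℚ n))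
      ((X (0 : Fin 2) * X 1 : MvPolynomial (Fin 2) ℚ)) =
      (rename (Prod.mk (0 : Fin 2)) (wittPolynomial p ℚ n)) *
        (rename (Prod.mk (1 : Fin 2)) (wittPolynomial p ℚ n)) := by
    simp [bind₁_X_right]
  have h2 : IsWeightedHomogeneous w
      ((bind₁ fun b : Fin 2 => rename (Prod.mk b) (wittPolynomial p ℚ n))
        ((X (0 : Fin 2) * X 1 : MvPolynomial (Fin 2) ℚ)) -
        ∑ i ∈ range n, C ((p : ℚ) ^ i) * wittStructureRat p (X (0:Fin 2) * X 1) i ^ p ^ (n - i))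
      (p ^ n) := by
    apply wh_sub
    · rw [hbind]; exact hW n
    · apply IsWeightedHomogeneous.sum
      intro i hi
      have hi' : i < n := mem_range.mp hi
      have h3 := (isWeightedHomogeneous_C w ((p : ℚ) ^ i)).mul
        (wh_pow (IH i hi') (p ^ (n - i)))
      rw [zero_add] at h3
      convert h3 using 1
      rw [← pow_add]
      congr 1
      omega
  have h4 := (isWeightedHomogeneous_C w ((1 : ℚ) / (p : ℚ) ^ n)).mul h2
  rwa [zero_add] at h4

/-- X-weight of `wittMul` monomials. -/
theorem wittMul_weightX (n : ℕ) (d : Fin 2 × ℕ →₀ ℕ)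
    (hd : coeff d (WittVector.wittMul p n) ≠ 0) :
    Finsupp.weight (fun s : Fin 2 × ℕ => if s.1 = 0 then p ^ s.2 else 0) d = p ^ n := by
  have hmap : coeff d (map (Int.castRingHom ℚ) (WittVector.wittMul p n)) ≠ 0 := by
    rw [coeff_map]
    simp only [Int.coe_castRingHom, Int.cast_ne_zero]
    exact hd
  rw [show WittVector.wittMul p = wittStructureInt p (X 0 * X 1) from rfl,
    map_wittStructureInt] at hmap
  have : map (Int.castRingHom ℚ) (X (0:Fin 2) * X 1 : MvPolynomial (Fin 2) ℤ)
      = X 0 * X 1 := by simp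
  rw [this] at hmap
  refine wh_wittStructureRat p _ ?_ n hmap
  intro k
  have h0 : IsWeightedHomogeneous (fun s : Fin 2 × ℕ => if s.1 = 0 then p ^ s.2 else 0)
      (rename (Prod.mk (0 : Fin 2)) (wittPolynomial p ℚ k)) (p ^ k) := by
    exact wh_rename _ (fun j : ℕ => p ^ j) (fun s => by simp) (wh_wittPolynomial p k)
  have h1 : IsWeightedHomogeneous (fun s : Fin 2 × ℕ => if s.1 = 0 then p ^ s.2 else 0)
      (rename (Prod.mk (1 : Fin 2)) (wittPolynomial p ℚ k)) 0 := by
    exact wh_rename _ (fun _ : ℕ => 0) (fun s => by simp)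
      (wh_zero_wt (wittPolynomial p ℚ k))
  have := h0.mul h1
  rwa [add_zero] at this




/-- The "r-relevant" degree of a monomial: `∑ d(b,k) * k * p^k`. -/
def fdeg (d : Fin 2 × ℕ →₀ ℕ) : ℕ := d.sum fun s e => e * (s.2 * p ^ s.2)

theorem fdeg_add (d₁ d₂ : Fin 2 × ℕ →₀ ℕ) : fdeg p (d₁ + d₂) = fdeg p d₁ + fdeg p d₂ :=
  Finsupp.sum_add_index (fun _ _ => by simp) (fun s _ e₁ e₂ => add_mul e₁ e₂ _)

theorem fdeg_single (s : Fin 2 × ℕ) (e : ℕ) : fdeg p (Finsupp.single s e) = e * (s.2 * p ^ s.2) :=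
  Finsupp.sum_single_index (by simp)

theorem exists_ord (c : ℤ) (hc : c ≠ 0) : ∃ k, (p : ℤ) ^ k ∣ c ∧ ¬ (p : ℤ) ^ (k + 1) ∣ c := by
  refine ⟨c.natAbs.factorization p, ?_, ?_⟩
  · have h1 : (p : ℕ) ^ c.natAbs.factorization p ∣ c.natAbs := Nat.ordProj_dvd _ _
    have := Int.natCast_dvd_natCast.mpr h1
    push_cast at this
    exact this.trans ((abs_dvd c c).mpr dvd_rfl)
  · intro h
    have h2 : ((p : ℤ) ^ (c.natAbs.factorization p + 1)).natAbs ∣ c.natAbs :=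
      Int.natAbs_dvd_natAbs.mpr h
    rw [Int.natAbs_pow, Int.natAbs_natCast] at h2
    exact Nat.pow_succ_factorization_not_dvd (Int.natAbs_ne_zero.mpr hc) hp.1 h2

/-- The integral recursion for `wittMul`. -/
theorem wittMul_rec (n : ℕ) :
    C ((p : ℤ) ^ n) * WittVector.wittMul p n =
      (rename (Prod.mk (0 : Fin 2)) (wittPolynomial p ℤ n)) *
          (rename (Prod.mk (1 : Fin 2)) (wittPolynomial p ℤ n)) -
        ∑ i ∈ range n, C ((p : ℤ) ^ i) * WittVector.wittMul p i ^ p ^ (n - i) := by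
  apply MvPolynomial.map_injective (Int.castRingHom ℚ) Int.cast_injective
  have haux := wittStructureRat_rec_aux p (X (0 : Fin 2) * X 1) n
  have hbind : (bind₁ fun b : Fin 2 => rename (Prod.mk b) (wittPolynomial p ℚ n))
      ((X (0 : Fin 2) * X 1 : MvPolynomial (Fin 2) ℚ)) =
      (rename (Prod.mk (0 : Fin 2)) (wittPolynomial p ℚ n)) *
        (rename (Prod.mk (1 : Fin 2)) (wittPolynomial p ℚ n)) := by
    simp [bind₁_X_right]
  rw [hbind] at haux
  rw [mul_comm] at haux
  have hmul : ∀ i : ℕ, map (Int.castRingHom ℚ) (WittVector.wittMul p i)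
      = wittStructureRat p (X (0 : Fin 2) * X 1) i := by
    intro i
    rw [show WittVector.wittMul p = wittStructureInt p (X 0 * X 1) from rfl,
      map_wittStructureInt]
    congr 1
    simp
  have key : ∀ i : ℕ, map (Int.castRingHom ℚ)
      (C ((p : ℤ) ^ i) : MvPolynomial (Fin 2 × ℕ) ℤ) = C ((p : ℚ) ^ i) := by
    intro i
    rw [map_C]
    simp
  rw [map_mul, key, hmul, haux, map_sub, map_mul, map_rename, map_rename,
    map_wittPolynomial, map_sum]
  congr 1
  apply Finset.sum_congr rfl
  intro i _
  simp only [map_mul, map_pow, key, hmul, map_C, Int.coe_castRingHom, Int.cast_natCast]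

theorem pow_fdeg {i : ℕ} {Q : MvPolynomial (Fin 2 × ℕ) ℤ}
    (hQ : ∀ d m, ¬ ((p : ℤ) ^ (m + 1) ∣ coeff d Q) → fdeg p d ≤ (i + m) * p ^ i) :
    ∀ s : ℕ, ∀ d m, ¬ ((p : ℤ) ^ (m + 1) ∣ coeff d (Q ^ s)) →
      fdeg p d ≤ (s * i + m) * p ^ i := by
  intro s
  induction s with
  | zero =>
      intro d m hd
      rw [pow_zero, coeff_one] at hd
      by_cases h : d = 0
      · subst h
        simp [fdeg]
      · rw [if_neg (by exact fun hh => h hh.symm)] at hd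
        exact absurd (dvd_zero _) hd
  | succ s ih =>
      intro d m hd
      by_contra hlt
      push_neg at hlt
      apply hd
      rw [show Q ^ (s + 1) = Q ^ s * Q from pow_succ Q s, coeff_mul]
      apply Finset.dvd_sum
      rintro ⟨d₁, d₂⟩ hmem
      have hsum : d₁ + d₂ = d := Finset.HasAntidiagonal.mem_antidiagonal.mp hmem
      by_cases h1 : coeff d₁ (Q ^ s) = 0
      · simp [h1]
      by_cases h2 : coeff d₂ Q = 0
      · simp [h2]
      obtain ⟨m₁, hm₁, hm₁'⟩ := exists_ord p _ h1
      obtain ⟨m₂, hm₂, hm₂'⟩ := exists_ord p _ h2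
      have hb₁ : fdeg p d₁ ≤ (s * i + m₁) * p ^ i := ih d₁ m₁ hm₁'
      have hb₂ : fdeg p d₂ ≤ (i + m₂) * p ^ i := hQ d₂ m₂ hm₂'
      have hfd : fdeg p d = fdeg p d₁ + fdeg p d₂ := by rw [← hsum, fdeg_add]
      have hppos : 0 < p ^ i := pow_pos hp.1.pos _
      have hm : m + 1 ≤ m₁ + m₂ := by
        by_contra hcon
        push_neg at hcon
        have : fdeg p d ≤ ((s + 1) * i + m) * p ^ i := by
          calc fdeg p d = fdeg p d₁ + fdeg p d₂ := hfd
            _ ≤ (s * i + m₁) * p ^ i + (i + m₂) * p ^ i := Nat.add_le_add hb₁ hb₂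
            _ = ((s + 1) * i + (m₁ + m₂)) * p ^ i := by ring
            _ ≤ ((s + 1) * i + m) * p ^ i := by
                apply Nat.mul_le_mul_right
                omega
        omega
      calc (p : ℤ) ^ (m + 1) ∣ (p : ℤ) ^ (m₁ + m₂) := pow_dvd_pow _ hm
        _ ∣ coeff d₁ (Q ^ s) * coeff d₂ Q := by
            rw [pow_add]
            exact mul_dvd_mul hm₁ hm₂

/-- Key divisibility: monomials of `wittMul p n` with `fdeg` exceeding `(n+m) p^n`
have coefficient divisible by `p^(m+1)`. -/
theorem wittMul_fdeg : ∀ n : ℕ, ∀ (d : Fin 2 × ℕ →₀ ℕ) (m : ℕ),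
    ¬ ((p : ℤ) ^ (m + 1) ∣ coeff d (WittVector.wittMul p n)) →
    fdeg p d ≤ (n + m) * p ^ n := by
  intro n
  induction n using Nat.strong_induction_on with
  | _ n IH =>
  intro d m hd
  by_contra hlt
  push_neg at hlt
  apply hd
  have hppos : 0 < p ^ n := pow_pos hp.1.pos _
  -- use the recursion
  have hrec := congr_arg (coeff d) (wittMul_rec p n)
  rw [coeff_C_mul, coeff_sub, coeff_sum] at hrec
  have hdvd : (p : ℤ) ^ (n + m + 1) ∣ (p : ℤ) ^ n * coeff d (WittVector.wittMul p n) := by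
    rw [hrec]
    apply dvd_sub
    · -- coefficient of the product of Witt polynomials
      have hexp : (rename (Prod.mk (0 : Fin 2)) (wittPolynomial p ℤ n)) *
          (rename (Prod.mk (1 : Fin 2)) (wittPolynomial p ℤ n)) =
          ∑ k ∈ range (n + 1), ∑ l ∈ range (n + 1),
            monomial (Finsupp.single ((0 : Fin 2), k) (p ^ (n - k)) +
              Finsupp.single ((1 : Fin 2), l) (p ^ (n - l))) ((p : ℤ) ^ k * (p : ℤ) ^ l) := by
        rw [wittPolynomial]
        simp only [map_sum, rename_monomial, Finsupp.mapDomain_single]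
        rw [Finset.sum_mul_sum]
        apply Finset.sum_congr rfl; intro k _
        apply Finset.sum_congr rfl; intro l _
        rw [monomial_mul]
      rw [hexp, coeff_sum]
      apply Finset.dvd_sum
      intro k hk
      rw [coeff_sum]
      apply Finset.dvd_sum
      intro l hl
      rw [coeff_monomial]
      split_ifs with hdd
      · subst hdd
        -- fdeg of this monomial is (k+l) * p^n
        rw [fdeg_add, fdeg_single, fdeg_single] at hlt
        have hk' : k < n + 1 := mem_range.mp hk
        have hl' : l < n + 1 := mem_range.mp hl
        have hfk : p ^ (n - k) * (k * p ^ k) = k * p ^ n := by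
          rw [show p ^ (n - k) * (k * p ^ k) = k * (p ^ (n - k) * p ^ k) by ring, ← pow_add]
          congr 2
          omega
        have hfl : p ^ (n - l) * (l * p ^ l) = l * p ^ n := by
          rw [show p ^ (n - l) * (l * p ^ l) = l * (p ^ (n - l) * p ^ l) by ring, ← pow_add]
          congr 2
          omega
        rw [hfk, hfl, ← add_mul] at hlt
        have : n + m + 1 ≤ k + l := by
          by_contra hcon
          push_neg at hcon
          have := Nat.mul_le_mul_right (p ^ n) (show k + l ≤ n + m by omega)
          omega
        calc (p : ℤ) ^ (n + m 
+ 1) ∣ (p : ℤ) ^ (k + l) := pow_dvd_pow _ this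
          _ = (p : ℤ) ^ k * (p : ℤ) ^ l := pow_add _ _ _
      · exact dvd_zero _
    · apply Finset.dvd_sum
      intro i hi
      have hi' : i < n := mem_range.mp hi
      rw [coeff_C_mul]
      have hstep : ¬ ((p : ℤ) ^ ((n + m - i) + 1) ∣
          coeff d (WittVector.wittMul p i ^ p ^ (n - i))) → False := by
        intro hnd
        have := pow_fdeg p (IH i hi') (p ^ (n - i)) d (n + m - i) hnd
        have hle : (p ^ (n - i) * i + (n + m - i)) * p ^ i ≤ (n + m) * p ^ n := by
          have h1 : p ^ (n - i) * i * p ^ i = i * p ^ n := by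
            rw [show p ^ (n - i) * i * p ^ i = i * (p ^ (n - i) * p ^ i) by ring, ← pow_add]
            congr 2
            omega
          have h2 : (n + m - i) * p ^ i ≤ (n + m - i) * p ^ n :=
            Nat.mul_le_mul_left _ (Nat.pow_le_pow_right hp.1.pos (by omega))
          calc (p ^ (n - i) * i + (n + m - i)) * p ^ i
              = p ^ (n - i) * i * p ^ i + (n + m - i) * p ^ i := by ring
            _ ≤ i * p ^ n + (n + m - i) * p ^ n := by
                rw [h1]
                exact Nat.add_le_add_left h2 _
            _ = (i + (n + m - i)) * p ^ n := by ring
            _ = (n + m) * p ^ n := by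
                congr 1
                omega
        omega
      have hdvd2 : (p : ℤ) ^ ((n + m - i) + 1) ∣
          coeff d (WittVector.wittMul p i ^ p ^ (n - i)) := by
        by_contra hc
        exact hstep hc
      calc (p : ℤ) ^ (n + m + 1) = (p : ℤ) ^ i * (p : ℤ) ^ ((n + m - i) + 1) := by
            rw [← pow_add]
            congr 1
            omega
        _ ∣ (p : ℤ) ^ i * coeff d (WittVector.wittMul p i ^ p ^ (n - i)) :=
            mul_dvd_mul_left _ hdvd2
    -- done
  have hppz : ((p : ℤ) ^ n) ≠ 0 := pow_ne_zero _ (by exact_mod_cast hp.1.ne_zero)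
  have : (p : ℤ) ^ (n + m + 1) = (p : ℤ) ^ n * (p : ℤ) ^ (m + 1) := by
    ring
  rw [this] at hdvd
  exact (mul_dvd_mul_iff_left hppz).mp hdvd

theorem wittMul_weightY (n : ℕ) (d : Fin 2 × ℕ →₀ ℕ)
    (hd : coeff d (WittVector.wittMul p n) ≠ 0) :
    Finsupp.weight (fun s : Fin 2 × ℕ => if s.1 = 1 then p ^ s.2 else 0) d = p ^ n := by
  have hmap : coeff d (map (Int.castRingHom ℚ) (WittVector.wittMul p n)) ≠ 0 := by
    rw [coeff_map]
    simp only [Int.coe_castRingHom, Int.cast_ne_zero]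
    exact hd
  rw [show WittVector.wittMul p = wittStructureInt p (X 0 * X 1) from rfl,
    map_wittStructureInt] at hmap
  have : map (Int.castRingHom ℚ) (X (0:Fin 2) * X 1 : MvPolynomial (Fin 2) ℤ)
      = X 0 * X 1 := by simp
  rw [this] at hmap
  refine wh_wittStructureRat p _ ?_ n hmap
  intro k
  have h0 : IsWeightedHomogeneous (fun s : Fin 2 × ℕ => if s.1 = 1 then p ^ s.2 else 0)
      (rename (Prod.mk (0 : Fin 2)) (wittPolynomial p ℚ k)) 0 :=
    wh_rename _ (fun _ : ℕ => 0) (fun s => by simp)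
      (wh_zero_wt (wittPolynomial p ℚ k))
  have h1 : IsWeightedHomogeneous (fun s : Fin 2 × ℕ => if s.1 = 1 then p ^ s.2 else 0)
      (rename (Prod.mk (1 : Fin 2)) (wittPolynomial p ℚ k)) (p ^ k) :=
    wh_rename _ (fun j : ℕ => p ^ j) (fun s => by simp) (wh_wittPolynomial p k)
  have := h0.mul h1
  rwa [zero_add] at this

theorem iterate_verschiebung_coeff_lt {R : Type*} [CommRing R] (z : WittVector p R)
    (n k : ℕ) (h : k < n) : ((WittVector.verschiebung)^[n] z).coeff k = 0 := by
  induction n generalizing k with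
  | zero => omega
  | succ n ih =>
      rw [Function.iterate_succ_apply']
      match k with
      | 0 => exact WittVector.verschiebung_coeff_zero _
      | k + 1 =>
          rw [WittVector.verschiebung_coeff_succ]
          exact ih k (by omega)

theorem wittMul_diag_coeff (i j : ℕ) :
    ((coeff (Finsupp.single ((0 : Fin 2), i) (p ^ j) +
        Finsupp.single ((1 : Fin 2), j) (p ^ i)) (WittVector.wittMul p (i + j)) : ℤ) :
      ZMod p) = 1 := by
  classical
  set d0 : Fin 2 × ℕ →₀ ℕ :=
    Finsupp.single ((0 : Fin 2), i) (p ^ j) + Finsupp.single ((1 : Fin 2), j) (p ^ i) with hd0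
  have hne : ((0 : Fin 2), i) ≠ ((1 : Fin 2), j) := by simp [Prod.ext_iff]
  set R := MvPolynomial (Fin 2) (ZMod p) with hR
  set x : WittVector p R := (WittVector.verschiebung)^[i] (WittVector.teichmuller p (X 0))
    with hxdef
  set y : WittVector p R := (WittVector.verschiebung)^[j] (WittVector.teichmuller p (X 1))
    with hydef
  have hx : ∀ k, x.coeff k = if k = i then X 0 else 0 := by
    intro k
    rcases lt_trichotomy k i with h | h | h
    · rw [if_neg (by omega), hxdef]
      exact iterate_verschiebung_coeff_lt p _ i k h
    · subst h
      rw [if_pos rfl, hxdef]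
      have := WittVector.iterate_verschiebung_coeff (WittVector.teichmuller p (X 0 : R)) k 0
      rw [zero_add] at this
      rw [this, WittVector.teichmuller_coeff_zero]
    · rw [if_neg (by omega), hxdef]
      obtain ⟨m, rfl⟩ : ∃ m, k = m + i := ⟨k - i, by omega⟩
      rw [WittVector.iterate_verschiebung_coeff]
      exact WittVector.teichmuller_coeff_pos p _ m (by omega)
  have hy : ∀ k, y.coeff k = if k = j then X 1 else 0 := by
    intro k
    rcases lt_trichotomy k j with h | h | h
    · rw [if_neg (by omega), hydef]
      exact iterate_verschiebung_coeff_lt p _ j k h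
    · subst h
      rw [if_pos rfl, hydef]
      have := WittVector.iterate_verschiebung_coeff (WittVector.teichmuller p (X 1 : R)) k 0
      rw [zero_add] at this
      rw [this, WittVector.teichmuller_coeff_zero]
    · rw [if_neg (by omega), hydef]
      obtain ⟨m, rfl⟩ : ∃ m, k = m + j := ⟨k - j, by omega⟩
      rw [WittVector.iterate_verschiebung_coeff]
      exact WittVector.teichmuller_coeff_pos p _ m (by omega)
  set g : Fin 2 × ℕ → R := Function.uncurry ![x.coeff, y.coeff] with hgdef
  have hg : ∀ s : Fin 2 × ℕ, g s =
      if s = ((0 : Fin 2), i) then X 0 else if s = ((1 : Fin 2), j) then X 1 else 0 := by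
    rintro ⟨b, k⟩
    fin_cases b
    · simp only [hgdef, Function.uncurry, Matrix.cons_val_zero, hx, Prod.mk.injEq]
      by_cases h : k = i <;> simp [h, hx]
    · simp only [hgdef, Function.uncurry, Matrix.cons_val_one, Matrix.head_cons, hy,
        Prod.mk.injEq]
      by_cases h : k = j <;> simp [h, hy, hne]
  have key : (x * y).coeff (i + j) = (X 0 : R) ^ p ^ j * (X 1 : R) ^ p ^ i := by
    rw [hxdef, hydef, WittVector.iterate_verschiebung_mul_coeff]
    rw [WittVector.teichmuller_coeff_zero, WittVector.teichmuller_coeff_zero]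
  have hcoeff : (x * y).coeff (i + j) =
      ∑ d ∈ (WittVector.wittMul p (i + j)).support,
        (Int.castRingHom R) (coeff d (WittVector.wittMul p (i + j))) *
          ∏ s ∈ d.support, g s ^ d s := by
    rw [WittVector.mul_coeff, WittVector.peval, aeval_def, algebraMap_int_eq, eval₂_eq]
  rw [hcoeff] at key
  have hzero : ∀ d ∈ (WittVector.wittMul p (i + j)).support, d ≠ d0 →
      (Int.castRingHom R) (coeff d (WittVector.wittMul p (i + j))) *
        ∏ s ∈ d.support, g s ^ d s = 0 := by
    intro d hdsupp hdne
    by_cases hsub : ∃ s ∈ d.support, g s = 0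
    · obtain ⟨s, hs, hgs⟩ := hsub
      rw [Finset.prod_eq_zero hs, mul_zero]
      rw [hgs]
      exact zero_pow (Finsupp.mem_support_iff.mp hs)
    · exfalso
      apply hdne
      push_neg at hsub
      have hss : ∀ s ∈ d.support, s = ((0 : Fin 2), i) ∨ s = ((1 : Fin 2), j) := by
        intro s hs
        have hne0 := hsub s hs
        rw [hg s] at hne0
        split_ifs at hne0 with h1 h2
        · exact Or.inl h1
        · exact Or.inr h2
        · exact absurd rfl hne0
      have hwX := wittMul_weightX p (i + j) d (mem_support_iff.mp hdsupp)
      have hwY := wittMul_weightY p (i + j) d (mem_support_iff.mp hdsupp)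
      have hwXval : Finsupp.weight
          (fun s : Fin 2 × ℕ => if s.1 = 0 then p ^ s.2 else 0) d = d ((0 : Fin 2), i) * p ^ i := by
        rw [Finsupp.weight_apply, Finsupp.sum]
        rw [Finset.sum_eq_single ((0 : Fin 2), i)]
        · simp
        · intro s hs hsne
          rcases hss s hs with h | h
          · exact absurd h hsne
          · subst h; simp
        · intro h
          rw [Finsupp.notMem_support_iff.mp h]
          simp
      have hwYval : Finsupp.weight
          (fun s : Fin 2 × ℕ => if s.1 = 1 then p ^ s.2 else 0) d = d ((1 : Fin 2), j) * p ^ j := by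
        rw [Finsupp.weight_apply, Finsupp.sum]
        rw [Finset.sum_eq_single ((1 : Fin 2), j)]
        · simp
        · intro s hs hsne
          rcases hss s hs with h | h
          · subst h; simp
          · exact absurd h hsne
        · intro h
          rw [Finsupp.notMem_support_iff.mp h]
          simp
      have hdx : d ((0 : Fin 2), i) = p ^ j := by
        have : d ((0 : Fin 2), i) * p ^ i = p ^ j * p ^ i := by
          rw [← hwXval, hwX, ← pow_add]
          congr 1
          omega
        exact Nat.eq_of_mul_eq_mul_right (pow_pos hp.1.pos i) this
      have hdy : d ((1 : Fin 2), j) = p ^ i := by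
        have : d ((1 : Fin 2), j) * p ^ j = p ^ i * p ^ j := by
          rw [← hwYval, hwY, ← pow_add]
        exact Nat.eq_of_mul_eq_mul_right (pow_pos hp.1.pos j) this
      ext s
      rcases eq_or_ne s ((0 : Fin 2), i) with rfl | hs0
      · rw [hdx, hd0]
        rw [Finsupp.add_apply, Finsupp.single_eq_same, Finsupp.single_eq_of_ne' (Ne.symm hne),
          add_zero]
      rcases eq_or_ne s ((1 : Fin 2), j) with rfl | hs1
      · rw [hdy, hd0]
        rw [Finsupp.add_apply, Finsupp.single_eq_of_ne' hne, Finsupp.single_eq_same, zero_add]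
      · have hnotin : s ∉ d.support := by
          intro hmem
          rcases hss s hmem with h | h
          · exact hs0 h
          · exact hs1 h
        rw [Finsupp.notMem_support_iff.mp hnotin, hd0]
        rw [Finsupp.add_apply, Finsupp.single_eq_of_ne' (Ne.symm hs0),
          Finsupp.single_eq_of_ne' (Ne.symm hs1), add_zero]
  rw [Finset.sum_eq_single d0 hzero (fun h => by
    rw [MvPolynomial.notMem_support_iff.mp h]
    simp)] at key
  have hsupp0 : d0.support = {((0 : Fin 2), i), ((1 : Fin 2), j)} := by
    rw [hd0, Finsupp.support_add_eq]
    · rw [Finsupp.support_single_ne_zero _ (pow_ne_zero _ hp.1.ne_zero),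
        Finsupp.support_single_ne_zero _ (pow_ne_zero _ hp.1.ne_zero)]
      rfl
    · rw [Finsupp.support_single_ne_zero _ (pow_ne_zero _ hp.1.ne_zero),
        Finsupp.support_single_ne_zero _ (pow_ne_zero _ hp.1.ne_zero)]
      simp [hne]
  have hd0x : d0 ((0 : Fin 2), i) = p ^ j := by
    rw [hd0, Finsupp.add_apply, Finsupp.single_eq_same,
      Finsupp.single_eq_of_ne' (Ne.symm hne), add_zero]
  have hd0y : d0 ((1 : Fin 2), j) = p ^ i := by
    rw [hd0, Finsupp.add_apply, Finsupp.single_eq_of_ne' hne, Finsupp.single_eq_same, zero_add]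
  have hprod : ∏ s ∈ d0.support, g s ^ d0 s = (X 0 : R) ^ p ^ j * (X 1 : R) ^ p ^ i := by
    rw [hsupp0, Finset.prod_insert (by simp [hne]), Finset.prod_singleton, hg, hg, hd0x, hd0y]
    rw [if_pos rfl, if_neg (Ne.symm hne), if_pos rfl]
  rw [hprod] at key
  have hmono : (X 0 : R) ^ p ^ j * (X 1 : R) ^ p ^ i =
      monomial (Finsupp.single (0 : Fin 2) (p ^ j) + Finsupp.single (1 : Fin 2) (p ^ i))
        (1 : ZMod p) := by
    rw [X_pow_eq_monomial, X_pow_eq_monomial, monomial_mul, one_mul]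
  rw [hmono] at key
  have hcast : ∀ z : ℤ, (Int.castRingHom R) z = C ((z : ZMod p)) := fun z => by
    rw [map_intCast (C : ZMod p →+* R) z]
    simp
  rw [hcast] at key
  have hfin := congr_arg
    (coeff (Finsupp.single (0 : Fin 2) (p ^ j) + Finsupp.single (1 : Fin 2) (p ^ i))) key
  rw [coeff_C_mul, coeff_monomial, if_pos rfl, mul_one] at hfin
  exact hfin






theorem fin2_cases (b : Fin 2) : b = 0 ∨ b = 1 := by omega

theorem eq_diag_of_support_pair (i j : ℕ) (d : Fin 2 × ℕ →₀ ℕ)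
    (hwX : Finsupp.weight (fun s : Fin 2 × ℕ => if s.1 = 0 then p ^ s.2 else 0) d = p ^ (i + j))
    (hwY : Finsupp.weight (fun s : Fin 2 × ℕ => if s.1 = 1 then p ^ s.2 else 0) d = p ^ (i + j))
    (hss : ∀ s ∈ d.support, s = ((0 : Fin 2), i) ∨ s = ((1 : Fin 2), j)) :
    d = Finsupp.single ((0 : Fin 2), i) (p ^ j) + Finsupp.single ((1 : Fin 2), j) (p ^ i) := by
  have hne : ((0 : Fin 2), i) ≠ ((1 : Fin 2), j) := by simp [Prod.ext_iff]
  have hwXval : Finsupp.weight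
      (fun s : Fin 2 × ℕ => if s.1 = 0 then p ^ s.2 else 0) d = d ((0 : Fin 2), i) * p ^ i := by
    rw [Finsupp.weight_apply, Finsupp.sum]
    rw [Finset.sum_eq_single ((0 : Fin 2), i)]
    · simp
    · intro s hs hsne
      rcases hss s hs with h | h
      · exact absurd h hsne
      · subst h; simp
    · intro h
      rw [Finsupp.notMem_support_iff.mp h]
      simp
  have hwYval : Finsupp.weight
      (fun s : Fin 2 × ℕ => if s.1 = 1 then p ^ s.2 else 0) d = d ((1 : Fin 2), j) * p ^ j := by
    rw [Finsupp.weight_apply, Finsupp.sum]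
    rw [Finset.sum_eq_single ((1 : Fin 2), j)]
    · simp
    · intro s hs hsne
      rcases hss s hs with h | h
      · subst h; simp
      · exact absurd h hsne
    · intro h
      rw [Finsupp.notMem_support_iff.mp h]
      simp
  have hdx : d ((0 : Fin 2), i) = p ^ j := by
    have h : d ((0 : Fin 2), i) * p ^ i = p ^ j * p ^ i := by
      rw [← hwXval, hwX, ← pow_add]
      congr 1
      omega
    exact Nat.eq_of_mul_eq_mul_right (pow_pos hp.1.pos i) h
  have hdy : d ((1 : Fin 2), j) = p ^ i := by
    have h : d ((1 : Fin 2), j) * p ^ j = p ^ i * p ^ j := by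
      rw [← hwYval, hwY, ← pow_add]
    exact Nat.eq_of_mul_eq_mul_right (pow_pos hp.1.pos j) h
  ext s
  rcases eq_or_ne s ((0 : Fin 2), i) with rfl | hs0
  · rw [hdx, Finsupp.add_apply, Finsupp.single_eq_same,
      Finsupp.single_eq_of_ne' (Ne.symm hne), add_zero]
  rcases eq_or_ne s ((1 : Fin 2), j) with rfl | hs1
  · rw [hdy, Finsupp.add_apply, Finsupp.single_eq_of_ne' hne, Finsupp.single_eq_same, zero_add]
  · have hnotin : s ∉ d.support := by
      intro hmem
      rcases hss s hmem with h | h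
      · exact hs0 h
      · exact hs1 h
    rw [Finsupp.notMem_support_iff.mp hnotin, Finsupp.add_apply,
      Finsupp.single_eq_of_ne' (Ne.symm hs0), Finsupp.single_eq_of_ne' (Ne.symm hs1), add_zero]

theorem diag_of_high (i j : ℕ) (d : Fin 2 × ℕ →₀ ℕ)
    (hwX : Finsupp.weight (fun s : Fin 2 × ℕ => if s.1 = 0 then p ^ s.2 else 0) d = p ^ (i + j))
    (hwY : Finsupp.weight (fun s : Fin 2 × ℕ => if s.1 = 1 then p ^ s.2 else 0) d = p ^ (i + j))
    (hfd : fdeg p d ≤ (i + j) * p ^ (i + j))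
    (hlow : ∀ s ∈ d.support, (if s.1 = (0 : Fin 2) then i else j) ≤ s.2) :
    d = Finsupp.single ((0 : Fin 2), i) (p ^ j) + Finsupp.single ((1 : Fin 2), j) (p ^ i) := by
  have hwX' : ∑ s ∈ d.support, d s * (if s.1 = (0 : Fin 2) then p ^ s.2 else 0) = p ^ (i + j) := by
    rw [← hwX, Finsupp.weight_apply, Finsupp.sum]
    exact Finset.sum_congr rfl fun s _ => smul_eq_mul ..
  have hwY' : ∑ s ∈ d.support, d s * (if s.1 = (1 : Fin 2) then p ^ s.2 else 0) = p ^ (i + j) := by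
    rw [← hwY, Finsupp.weight_apply, Finsupp.sum]
    exact Finset.sum_congr rfl fun s _ => smul_eq_mul ..
  have hsum2 : ∑ s ∈ d.support, d s * ((if s.1 = (0 : Fin 2) then i else j) * p ^ s.2)
      = (i + j) * p ^ (i + j) := by
    have hpt : ∀ s ∈ d.support, d s * ((if s.1 = (0 : Fin 2) then i else j) * p ^ s.2)
        = i * (d s * (if s.1 = (0 : Fin 2) then p ^ s.2 else 0))
          + j * (d s * (if s.1 = (1 : Fin 2) then p ^ s.2 else 0)) := by
      intro s _
      rcases fin2_cases s.1 with h | h <;> rw [h] <;> norm_num <;> ring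
    rw [Finset.sum_congr rfl hpt, Finset.sum_add_distrib, ← Finset.mul_sum, ← Finset.mul_sum,
      hwX', hwY']
    ring
  have hfd' : fdeg p d = ∑ s ∈ d.support, d s * (s.2 * p ^ s.2) := rfl
  have hle : ∀ s ∈ d.support, d s * ((if s.1 = (0 : Fin 2) then i else j) * p ^ s.2)
      ≤ d s * (s.2 * p ^ s.2) := by
    intro s hs
    exact Nat.mul_le_mul_left _ (Nat.mul_le_mul_right _ (hlow s hs))
  have heqsum : ∑ s ∈ d.support, d s * ((if s.1 = (0 : Fin 2) then i else j) * p ^ s.2)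
      = ∑ s ∈ d.support, d s * (s.2 * p ^ s.2) := by
    apply le_antisymm (Finset.sum_le_sum hle)
    rw [hsum2, ← hfd']
    exact hfd
  have hpointwise := (Finset.sum_eq_sum_iff_of_le hle).mp heqsum
  apply eq_diag_of_support_pair p i j d hwX hwY
  intro s hs
  have heq := hpointwise s hs
  have hds : d s ≠ 0 := Finsupp.mem_support_iff.mp hs
  have hpp : 0 < p ^ s.2 := pow_pos hp.1.pos _
  have h2 : s.2 = (if s.1 = (0 : Fin 2) then i else j) := by
    have := Nat.eq_of_mul_eq_mul_left (Nat.pos_of_ne_zero hds) heq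
    have := Nat.eq_of_mul_eq_mul_right hpp this
    omega
  rcases fin2_cases s.1 with h | h
  · left
    rw [h] at h2
    simp only [if_true] at h2
    exact Prod.ext h (by simpa using h2)
  · right
    rw [h] at h2
    norm_num at h2
    exact Prod.ext h (by simpa using h2)

theorem real_sum_bound (a b r : ℝ) (hr : 0 ≤ r) (N : ℕ) (d : Fin 2 × ℕ →₀ ℕ)
    (hwX : Finsupp.weight (fun s : Fin 2 × ℕ => if s.1 = 0 then p ^ s.2 else 0) d = p ^ N)
    (hwY : Finsupp.weight (fun s : Fin 2 × ℕ => if s.1 = 1 then p ^ s.2 else 0) d = p ^ N)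
    (hfd : fdeg p d ≤ N * p ^ N) :
    (a + b - N * r) * (p : ℝ) ^ N ≤
      ∑ s ∈ d.support,
        (d s : ℝ) * (((if s.1 = (0 : Fin 2) then a else b) - s.2 * r) * (p : ℝ) ^ s.2) := by
  have hwX' : ∑ s ∈ d.support, d s * (if s.1 = (0 : Fin 2) then p ^ s.2 else 0) = p ^ N := by
    rw [← hwX, Finsupp.weight_apply, Finsupp.sum]
    exact Finset.sum_congr rfl fun s _ => smul_eq_mul ..
  have hwY' : ∑ s ∈ d.support, d s * (if s.1 = (1 : Fin 2) then p ^ s.2 else 0) = p ^ N := by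
    rw [← hwY, Finsupp.weight_apply, Finsupp.sum]
    exact Finset.sum_congr rfl fun s _ => smul_eq_mul ..
  have hpt : ∀ s ∈ d.support,
      (d s : ℝ) * (((if s.1 = (0 : Fin 2) then a else b) - s.2 * r) * (p : ℝ) ^ s.2)
      = a * ((d s * (if s.1 = (0 : Fin 2) then p ^ s.2 else 0) : ℕ) : ℝ)
        + b * ((d s * (if s.1 = (1 : Fin 2) then p ^ s.2 else 0) : ℕ) : ℝ)
        - r * ((d s * (s.2 * p ^ s.2) : ℕ) : ℝ) := by
    intro s _
    rcases fin2_cases s.1 with h | h <;> rw [h] <;> norm_num <;> push_cast <;> ring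
  rw [Finset.sum_congr rfl hpt, Finset.sum_sub_distrib, Finset.sum_add_distrib,
    ← Finset.mul_sum, ← Finset.mul_sum, ← Finset.mul_sum, ← Nat.cast_sum, ← Nat.cast_sum,
    ← Nat.cast_sum, hwX', hwY']
  have hfd2 : (∑ s ∈ d.support, d s * (s.2 * p ^ s.2) : ℕ) ≤ N * p ^ N := hfd
  have hfd3 : ((∑ s ∈ d.support, d s * (s.2 * p ^ s.2) : ℕ) : ℝ) ≤ (N : ℝ) * (p : ℝ) ^ N := by
    exact_mod_cast hfd2
  have h4 : r * ((∑ s ∈ d.support, d s * (s.2 * p ^ s.2) : ℕ) : ℝ) ≤ r * ((N : ℝ) * (p : ℝ) ^ N) :=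
    mul_le_mul_of_nonneg_left hfd3 hr
  push_cast
  push_cast at h4
  nlinarith [h4]

theorem bridge_lt {w : EReal} (hw : w ≠ ⊥) {q c t : ℝ} (hq : 0 < q)
    (h : (t : EReal) < w * ((q⁻¹ : ℝ) : EReal) + (c : EReal)) :
    (((t - c) * q : ℝ) : EReal) < w := by
  induction w using EReal.rec with
  | bot => exact absurd rfl hw
  | coe u =>
      rw [← EReal.coe_mul, ← EReal.coe_add, EReal.coe_lt_coe_iff] at h
      rw [EReal.coe_lt_coe_iff]
      have h2 : (t - c) * q < u * q⁻¹ * q :=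
        mul_lt_mul_of_pos_right (by linarith) hq
      rwa [mul_assoc, inv_mul_cancel₀ hq.ne', mul_one] at h2
  | top => exact EReal.coe_lt_top _


end Poly

end GaussVal

open GaussVal MvPolynomial Finset in
/-- The Gauss valuation `v_r` on bounded elements of the ring of Witt
vectors of a perfect field `F` of characteristic `p` with a nontrivial (additive)
valuation `v` is multiplicative: `v_r (x * y) = v_r x + v_r y`.

Here `x = Σ [x_n] p^n` with `x_n = (x.coeff n) ^ (p ^ (-n))`, so
`v (x_n) = v (x.coeff n) * (p ^ n)⁻¹`, and
`v_r x = ⨅ n, v (x_n) + n * r`. -/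
theorem gauss_valuation_multiplicative
    (p : ℕ) [hp : Fact p.Prime]
    (F : Type*) [Field F] [CharP F p] [PerfectRing F p]
    (v : F → EReal)
    (hv_zero : v 0 = ⊤)
    (hv_ne_bot : ∀ a : F, v a ≠ ⊥)
    (hv_mul : ∀ a b : F, v (a * b) = v a + v b)
    (hv_add : ∀ a b : F, min (v a) (v b) ≤ v (a + b))
    (hv_nontrivial : ∃ a : F, a ≠ 0 ∧ v a ≠ 0 ∧ v a ≠ ⊤)
    (r : ℝ) (hr : 0 < r)
    (x y : WittVector p F)
    (hx : ∃ C : ℝ, ∀ n : ℕ, (C : EReal) ≤ v (x.coeff n) * (((((p : ℝ) ^ n)⁻¹ : ℝ) : EReal)))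
    (hy : ∃ C : ℝ, ∀ n : ℕ, (C : EReal) ≤ v (y.coeff n) * (((((p : ℝ) ^ n)⁻¹ : ℝ) : EReal))) :
    (⨅ n : ℕ, v ((x * y).coeff n) * (((((p : ℝ) ^ n)⁻¹ : ℝ) : EReal))
        + (((n : ℝ) * r : ℝ) : EReal))
      = (⨅ n : ℕ, v (x.coeff n) * (((((p : ℝ) ^ n)⁻¹ : ℝ) : EReal))
          + (((n : ℝ) * r : ℝ) : EReal))
        + (⨅ n : ℕ, v (y.coeff n) * (((((p : ℝ) ^ n)⁻¹ : ℝ) : EReal))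
            + (((n : ℝ) * r : ℝ) : EReal)) := by
  classical
  obtain ⟨Cx, hCx⟩ := hx
  obtain ⟨Cy, hCy⟩ := hy
  have hppos : (0 : ℝ) < (p : ℝ) := by exact_mod_cast hp.1.pos
  have hq : ∀ n : ℕ, (0 : ℝ) < (p : ℝ) ^ n := fun n => pow_pos hppos n
  set τx : ℕ → EReal := fun n : ℕ => v (x.coeff n) * (((((p : ℝ) ^ n)⁻¹ : ℝ) : EReal))
    + (((n : ℝ) * r : ℝ) : EReal) with hτx
  set τy : ℕ → EReal := fun n : ℕ => v (y.coeff n) * (((((p : ℝ) ^ n)⁻¹ : ℝ) : EReal))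
    + (((n : ℝ) * r : ℝ) : EReal) with hτy
  set τz : ℕ → EReal := fun n : ℕ => v ((x * y).coeff n) * (((((p : ℝ) ^ n)⁻¹ : ℝ) : EReal))
    + (((n : ℝ) * r : ℝ) : EReal) with hτz
  have vone : v 1 = 0 := v_one hv_ne_bot hv_mul hv_nontrivial
  have vtop : ∀ {c : F}, v c = ⊤ ↔ c = 0 := fun {c} =>
    v_top_iff hv_zero hv_ne_bot hv_mul hv_nontrivial
  -- lower bounds
  have hτxge2 : ∀ n : ℕ, ((Cx + n * r : ℝ) : EReal) ≤ τx n := by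
    intro n
    rw [EReal.coe_add]
    exact add_le_add (hCx n) (le_refl _)
  have hτyge2 : ∀ n : ℕ, ((Cy + n * r : ℝ) : EReal) ≤ τy n := by
    intro n
    rw [EReal.coe_add]
    exact add_le_add (hCy n) (le_refl _)
  have hnr0 : ∀ n : ℕ, (0 : ℝ) ≤ (n : ℝ) * r := by
    intro n
    positivity
  have hτxge : ∀ n : ℕ, (Cx : EReal) ≤ τx n := by
    intro n
    refine le_trans ?_ (hτxge2 n)
    rw [EReal.coe_le_coe_iff]
    linarith [hnr0 n]
  have hτyge : ∀ n : ℕ, (Cy : EReal) ≤ τy n := by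
    intro n
    refine le_trans ?_ (hτyge2 n)
    rw [EReal.coe_le_coe_iff]
    linarith [hnr0 n]
  have hAbot : (⨅ n, τx n) ≠ ⊥ := fun h =>
    absurd (h ▸ le_iInf hτxge) (not_le.mpr (EReal.bot_lt_coe Cx))
  have hBbot : (⨅ n, τy n) ≠ ⊥ := fun h =>
    absurd (h ▸ le_iInf hτyge) (not_le.mpr (EReal.bot_lt_coe Cy))
  -- degenerate cases
  by_cases hAtop : (⨅ n, τx n) = ⊤
  · have hxz : x = 0 := by
      apply WittVector.ext
      intro n
      rw [WittVector.zero_coeff, ← vtop]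
      have hτ : τx n = ⊤ := top_le_iff.mp (hAtop ▸ iInf_le τx n)
      simp only [hτx] at hτ
      exact mul_inv_top (hv_ne_bot _) (hq n) hτ
    have hτz_top : ∀ n, τz n = ⊤ := by
      intro n
      simp only [hτz]
      rw [show (x * y).coeff n = 0 by rw [hxz, zero_mul, WittVector.zero_coeff]]
      rw [hv_zero, EReal.top_mul_of_pos (by exact_mod_cast inv_pos.mpr (hq n)),
        EReal.top_add_of_ne_bot (EReal.coe_ne_bot _)]
    rw [hAtop, show (⨅ n, τz n) = ⊤ from le_antisymm le_top (le_iInf fun n => (hτz_top n).ge),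
      EReal.top_add_of_ne_bot hBbot]
  by_cases hBtop : (⨅ n, τy n) = ⊤
  · have hyz : y = 0 := by
      apply WittVector.ext
      intro n
      rw [WittVector.zero_coeff, ← vtop]
      have hτ : τy n = ⊤ := top_le_iff.mp (hBtop ▸ iInf_le τy n)
      simp only [hτy] at hτ
      exact mul_inv_top (hv_ne_bot _) (hq n) hτ
    have hτz_top : ∀ n, τz n = ⊤ := by
      intro n
      simp only [hτz]
      rw [show (x * y).coeff n = 0 by rw [hyz, mul_zero, WittVector.zero_coeff]]
      rw [hv_zero, EReal.top_mul_of_pos (by exact_mod_cast inv_pos.mpr (hq n)),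
        EReal.top_add_of_ne_bot (EReal.coe_ne_bot _)]
    rw [hBtop, show (⨅ n, τz n) = ⊤ from le_antisymm le_top (le_iInf fun n => (hτz_top n).ge),
      EReal.add_top_of_ne_bot hAbot]
  -- main case
  rcases ereal_cases (⨅ n, τx n) with hA | hA | ⟨a, hA⟩
  · exact absurd hA hAbot
  · exact absurd hA hAtop
  rcases ereal_cases (⨅ n, τy n) with hB | hB | ⟨b, hB⟩
  · exact absurd hB hBbot
  · exact absurd hB hBtop
  -- the infimum is attained
  have hattain : ∀ (τ : ℕ → EReal) (C u : ℝ), (∀ n : ℕ, ((C + n * r : ℝ) : EReal) ≤ τ n) →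
      (⨅ n, τ n) = (u : EReal) → ∃ n, τ n = (u : EReal) := by
    intro τ C u hge hinf
    by_contra hcon
    push_neg at hcon
    obtain ⟨n0, hn0⟩ := exists_nat_gt ((u - C) / r)
    have hCn0 : u < C + n0 * r := by
      have h1 := (div_lt_iff₀ hr).mp hn0
      linarith
    have hgt : ∀ n, (u : EReal) < τ n := by
      intro n
      exact lt_of_le_of_ne (hinf ▸ iInf_le τ n) (Ne.symm (hcon n))
    have hne : (Finset.range (n0 + 1)).Nonempty := ⟨0, by simp⟩
    have hLgt : (u : EReal) < min ((Finset.range (n0 + 1)).inf' hne τ) ((C + n0 * r : ℝ) : EReal) := by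
      rw [lt_min_iff]
      constructor
      · obtain ⟨m, _, hmeq⟩ := Finset.exists_mem_eq_inf' hne τ
        rw [hmeq]
        exact hgt m
      · exact_mod_cast hCn0
    have hLle : ∀ n, min ((Finset.range (n0 + 1)).inf' hne τ) ((C + n0 * r : ℝ) : EReal) ≤ τ n := by
      intro n
      rcases le_or_gt n n0 with h | h
      · exact le_trans (min_le_left _ _) (Finset.inf'_le τ (Finset.mem_range.mpr (by omega)))
      · refine le_trans (min_le_right _ _) (le_trans ?_ (hge n))
        rw [EReal.coe_le_coe_iff]
        have h2 : (n0 : ℝ) ≤ (n : ℝ) := by exact_mod_cast h.le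
        nlinarith [hr.le]
    have hfinal : (u : EReal) < ⨅ n, τ n := lt_of_lt_of_le hLgt (le_iInf hLle)
    rw [hinf] at hfinal
    exact absurd hfinal (lt_irrefl _)
  obtain ⟨i0, hi0⟩ := hattain τx Cx a hτxge2 hA
  obtain ⟨j0, hj0⟩ := hattain τy Cy b hτyge2 hB
  have hexx : ∃ n, τx n = (a : EReal) := ⟨i0, hi0⟩
  have hexy : ∃ n, τy n = (b : EReal) := ⟨j0, hj0⟩
  set i := Nat.find hexx with hidef
  set j := Nat.find hexy with hjdef
  have hτxi : τx i = (a : EReal) := Nat.find_spec hexx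
  have hτyj : τy j = (b : EReal) := Nat.find_spec hexy
  have himin : ∀ k, k < i → τx k ≠ (a : EReal) := fun k hk => Nat.find_min hexx hk
  have hjmin : ∀ k, k < j → τy k ≠ (b : EReal) := fun k hk => Nat.find_min hexy hk
  -- coordinatewise bounds
  have hvx_ge : ∀ k : ℕ, (((a - k * r) * (p : ℝ) ^ k : ℝ) : EReal) ≤ v (x.coeff k) := by
    intro k
    have h0 : (a : EReal) ≤ τx k := hA ▸ iInf_le τx k
    simp only [hτx] at h0
    exact (bridge (hv_ne_bot _) (hq k)).mp h0
  have hvy_ge : ∀ k : ℕ, (((b - k * r) * (p : ℝ) ^ k : ℝ) : EReal) ≤ v (y.coeff k) := by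
    intro k
    have h0 : (b : EReal) ≤ τy k := hB ▸ iInf_le τy k
    simp only [hτy] at h0
    exact (bridge (hv_ne_bot _) (hq k)).mp h0
  have hvx_gt : ∀ k : ℕ, k < i → (((a - k * r) * (p : ℝ) ^ k : ℝ) : EReal) < v (x.coeff k) := by
    intro k hk
    have h0 : (a : EReal) < τx k := lt_of_le_of_ne (hA ▸ iInf_le τx k) (Ne.symm (himin k hk))
    simp only [hτx] at h0
    exact bridge_lt (hv_ne_bot _) (hq k) h0
  have hvy_gt : ∀ k : ℕ, k < j → (((b - k * r) * (p : ℝ) ^ k : ℝ) : EReal) < v (y.coeff k) := by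
    intro k hk
    have h0 : (b : EReal) < τy k := lt_of_le_of_ne (hB ▸ iInf_le τy k) (Ne.symm (hjmin k hk))
    simp only [hτy] at h0
    exact bridge_lt (hv_ne_bot _) (hq k) h0
  have hvxi : v (x.coeff i) = (((a - i * r) * (p : ℝ) ^ i : ℝ) : EReal) := by
    have h0 := hτxi
    simp only [hτx] at h0
    exact bridge_eq (hv_ne_bot _) (hq i) h0.symm
  have hvyj : v (y.coeff j) = (((b - j * r) * (p : ℝ) ^ j : ℝ) : EReal) := by
    have h0 := hτyj
    simp only [hτy] at h0
    exact bridge_eq (hv_ne_bot _) (hq j) h0.symm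
  -- the evaluation of coefficients of the product
  set φF : ZMod p →+* F := ZMod.castHom (dvd_refl p) F with hφF
  set gF : Fin 2 × ℕ → F := Function.uncurry ![x.coeff, y.coeff] with hgF
  set QN : ℕ → MvPolynomial (Fin 2 × ℕ) (ZMod p) :=
    fun N => MvPolynomial.map (Int.castRingHom (ZMod p)) (WittVector.wittMul p N) with hQN
  have hmulcoeff : ∀ N : ℕ, (x * y).coeff N =
      ∑ d ∈ (QN N).support, φF (coeff d (QN N)) * ∏ s ∈ d.support, gF s ^ d s := by
    intro N
    rw [WittVector.mul_coeff, WittVector.peval, aeval_def, algebraMap_int_eq]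
    have hcomp : (Int.castRingHom F) = φF.comp (Int.castRingHom (ZMod p)) :=
      Subsingleton.elim _ _
    rw [hcomp, ← eval₂_map, eval₂_eq]
  have hg0 : ∀ k : ℕ, gF ((0 : Fin 2), k) = x.coeff k := fun k => rfl
  have hg1 : ∀ k : ℕ, gF ((1 : Fin 2), k) = y.coeff k := fun k => rfl
  have hsupp_ne : ∀ (N : ℕ) d, d ∈ (QN N).support → coeff d (WittVector.wittMul p N) ≠ 0 := by
    intro N d hd h0
    rw [mem_support_iff] at hd
    apply hd
    simp only [hQN, coeff_map, h0]
    simp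
  have hsupp_wX : ∀ (N : ℕ) d, d ∈ (QN N).support →
      Finsupp.weight (fun s : Fin 2 × ℕ => if s.1 = 0 then p ^ s.2 else 0) d = p ^ N :=
    fun N d hd => wittMul_weightX p N d (hsupp_ne N d hd)
  have hsupp_wY : ∀ (N : ℕ) d, d ∈ (QN N).support →
      Finsupp.weight (fun s : Fin 2 × ℕ => if s.1 = 1 then p ^ s.2 else 0) d = p ^ N :=
    fun N d hd => wittMul_weightY p N d (hsupp_ne N d hd)
  have hsupp_fdeg : ∀ (N : ℕ) d, d ∈ (QN N).support → fdeg p d ≤ N * p ^ N := by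
    intro N d hd
    have hd' : coeff d (QN N) ≠ 0 := mem_support_iff.mp hd
    simp only [hQN, coeff_map, Int.coe_castRingHom] at hd'
    have hnd : ¬ ((p : ℤ) ^ (0 + 1) ∣ coeff d (WittVector.wittMul p N)) := by
      rw [zero_add, pow_one]
      intro hdvd
      exact hd' ((ZMod.intCast_zmod_eq_zero_iff_dvd _ p).mpr hdvd)
    have h2 := wittMul_fdeg p N d 0 hnd
    simpa using h2
  have hvφ : ∀ u : ZMod p, u ≠ 0 → v (φF u) = 0 := by
    intro u hu
    apply v_root_of_unity hv_zero hv_ne_bot hv_mul hv_nontrivial (p - 1)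
      (by have := hp.1.two_le; omega)
    rw [← map_pow, ZMod.pow_card_sub_one_eq_one hu, map_one]
  have hterm_val : ∀ (N : ℕ) d, d ∈ (QN N).support →
      v (φF (coeff d (QN N)) * ∏ s ∈ d.support, gF s ^ d s)
        = ∑ s ∈ d.support, d s • v (gF s) := by
    intro N d hd
    rw [hv_mul, hvφ _ (mem_support_iff.mp hd), zero_add,
      v_prod hv_ne_bot hv_mul hv_nontrivial]
    exact Finset.sum_congr rfl fun s _ => v_pow hv_ne_bot hv_mul hv_nontrivial _ _
  set β : Fin 2 × ℕ → ℝ :=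
    fun s => ((if s.1 = (0 : Fin 2) then a else b) - s.2 * r) * (p : ℝ) ^ s.2 with hβ
  have hβle : ∀ s : Fin 2 × ℕ, (β s : EReal) ≤ v (gF s) := by
    rintro ⟨c, k⟩
    rcases fin2_cases c with rfl | rfl
    · rw [hg0]
      simp only [hβ, if_pos rfl]
      exact hvx_ge k
    · rw [hg1]
      have hb : β ((1 : Fin 2), k) = (b - k * r) * (p : ℝ) ^ k := by
        simp only [hβ]
        norm_num
      rw [hb]
      exact hvy_ge k
  have hterm_ge : ∀ (N : ℕ) d, d ∈ (QN N).support →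
      (((a + b - N * r) * (p : ℝ) ^ N : ℝ) : EReal) ≤ ∑ s ∈ d.support, d s • v (gF s) := by
    intro N d hd
    have h1 : ((∑ s ∈ d.support, d s • β s : ℝ) : EReal) ≤ ∑ s ∈ d.support, d s • v (gF s) := by
      apply sum_coe_le
      intro s _
      rw [← coe_nsmul']
      exact nsmul_mono (hβle s) _
    refine le_trans ?_ h1
    rw [EReal.coe_le_coe_iff]
    have h2 := real_sum_bound p a b r hr.le N d (hsupp_wX N d hd) (hsupp_wY N d hd)
      (hsupp_fdeg N d hd)
    refine le_trans h2 (le_of_eq ?_)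
    exact Finset.sum_congr rfl fun s _ => by rw [nsmul_eq_mul]
  -- the lower bound
  have hlower : ∀ N : ℕ, ((a + b : ℝ) : EReal) ≤ τz N := by
    intro N
    have hv1 : (((a + b - N * r) * (p : ℝ) ^ N : ℝ) : EReal) ≤ v ((x * y).coeff N) := by
      rw [hmulcoeff N]
      apply v_sum_ge hv_zero hv_add
      intro d hd
      rw [hterm_val N d hd]
      exact hterm_ge N d hd
    simp only [hτz]
    exact (bridge (hv_ne_bot _) (hq N)).mpr hv1
  -- the upper bound: exact value at N = i + j
  set N := i + j with hN
  set d0 : Fin 2 × ℕ →₀ ℕ :=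
    Finsupp.single ((0 : Fin 2), i) (p ^ j) + Finsupp.single ((1 : Fin 2), j) (p ^ i) with hd0
  have hne2 : ((0 : Fin 2), i) ≠ ((1 : Fin 2), j) := by simp [Prod.ext_iff]
  have hcoeffd0 : coeff d0 (QN N) = 1 := by
    simp only [hQN, coeff_map, Int.coe_castRingHom]
    rw [hd0, hN]
    exact wittMul_diag_coeff p i j
  have hd0in : d0 ∈ (QN N).support := by
    rw [mem_support_iff, hcoeffd0]
    exact one_ne_zero
  have hd0supp : d0.support = {((0 : Fin 2), i), ((1 : Fin 2), j)} := by
    rw [hd0, Finsupp.support_add_eq]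
    · rw [Finsupp.support_single_ne_zero _ (pow_ne_zero _ hp.1.ne_zero),
        Finsupp.support_single_ne_zero _ (pow_ne_zero _ hp.1.ne_zero)]
      rfl
    · rw [Finsupp.support_single_ne_zero _ (pow_ne_zero _ hp.1.ne_zero),
        Finsupp.support_single_ne_zero _ (pow_ne_zero _ hp.1.ne_zero)]
      simp [hne2]
  have hd0x : d0 ((0 : Fin 2), i) = p ^ j := by
    rw [hd0, Finsupp.add_apply, Finsupp.single_eq_same,
      Finsupp.single_eq_of_ne' (Ne.symm hne2), add_zero]
  have hd0y : d0 ((1 : Fin 2), j) = p ^ i := by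
    rw [hd0, Finsupp.add_apply, Finsupp.single_eq_of_ne' hne2, Finsupp.single_eq_same, zero_add]
  set D : ℝ := (a + b - N * r) * (p : ℝ) ^ N with hD
  have hdiagval : v (φF (coeff d0 (QN N)) * ∏ s ∈ d0.support, gF s ^ d0 s) = (D : EReal) := by
    rw [hcoeffd0, map_one, one_mul,
      v_prod hv_ne_bot hv_mul hv_nontrivial, hd0supp,
      Finset.sum_insert (by simp [hne2]), Finset.sum_singleton,
      v_pow hv_ne_bot hv_mul hv_nontrivial, v_pow hv_ne_bot hv_mul hv_nontrivial,
      hg0, hg1, hd0x, hd0y, hvxi, hvyj, coe_nsmul', coe_nsmul', ← EReal.coe_add,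
      EReal.coe_eq_coe_iff, hD, hN]
    simp only [nsmul_eq_mul]
    push_cast
    rw [pow_add]
    ring
  have hterm_gt : ∀ d, d ∈ (QN N).support → d ≠ d0 →
      (D : EReal) < ∑ s ∈ d.support, d s • v (gF s) := by
    intro d hd hdne
    by_cases hlow : ∀ s ∈ d.support, (if s.1 = (0 : Fin 2) then i else j) ≤ s.2
    · exact absurd (diag_of_high p i j d (hN ▸ hsupp_wX N d hd) (hN ▸ hsupp_wY N d hd)
        (hN ▸ hsupp_fdeg N d hd) hlow) (hd0 ▸ hdne)
    · push_neg at hlow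
      obtain ⟨s0, hs0mem, hs0lt⟩ := hlow
      have hstrict : (β s0 : EReal) < v (gF s0) := by
        obtain ⟨c, k⟩ := s0
        rcases fin2_cases c with rfl | rfl
        · simp only [if_pos rfl] at hs0lt
          rw [hg0]
          simp only [hβ, if_pos rfl]
          exact hvx_gt k hs0lt
        · norm_num at hs0lt
          rw [hg1]
          have hb : β ((1 : Fin 2), k) = (b - k * r) * (p : ℝ) ^ k := by
            simp only [hβ]
            norm_num
          rw [hb]
          exact hvy_gt k hs0lt
      have hd0s : d s0 ≠ 0 := Finsupp.mem_support_iff.mp hs0mem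
      have h1 : ((d s0 • β s0 : ℝ) : EReal) < d s0 • v (gF s0) := nsmul_strict hstrict hd0s
      have h2 : ((∑ s ∈ d.support.erase s0, d s • β s : ℝ) : EReal)
          ≤ ∑ s ∈ d.support.erase s0, d s • v (gF s) := by
        apply sum_coe_le
        intro s _
        rw [← coe_nsmul']
        exact nsmul_mono (hβle s) _
      have h3 := add_lt_add_left_real h1 h2
      have h4 : (D : EReal) ≤
          ((d s0 • β s0 + ∑ s ∈ d.support.erase s0, d s • β s : ℝ) : EReal) := by
        rw [EReal.coe_le_coe_iff, Finset.add_sum_erase d.support (fun s => d s • β s) hs0mem, hD]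
        have h5 := real_sum_bound p a b r hr.le N d (hsupp_wX N d hd) (hsupp_wY N d hd)
          (hsupp_fdeg N d hd)
        refine le_trans h5 (le_of_eq ?_)
        exact Finset.sum_congr rfl fun s _ => by rw [nsmul_eq_mul]
      calc (D : EReal) ≤ _ := h4
        _ < _ := h3
        _ = ∑ s ∈ d.support, d s • v (gF s) :=
            Finset.add_sum_erase d.support (fun s => d s • v (gF s)) hs0mem
  have hvalN : v ((x * y).coeff N) = (D : EReal) := by
    have hlt : v (φF (coeff d0 (QN N)) * ∏ s ∈ d0.support, gF s ^ d0 s)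
        < v (∑ d ∈ (QN N).support.erase d0,
            φF (coeff d (QN N)) * ∏ s ∈ d.support, gF s ^ d s) := by
      rw [hdiagval]
      apply v_sum_gt hv_zero hv_add
      intro d hd
      have hdmem : d ∈ (QN N).support := Finset.mem_of_mem_erase hd
      have hdne : d ≠ d0 := Finset.ne_of_mem_erase hd
      rw [hterm_val N d hdmem]
      exact hterm_gt d hdmem hdne
    calc v ((x * y).coeff N)
        = v (φF (coeff d0 (QN N)) * ∏ s ∈ d0.support, gF s ^ d0 s
            + ∑ d ∈ (QN N).support.erase d0,
                φF (coeff d (QN N)) * ∏ s ∈ d.support, gF s ^ d s) := by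
          rw [hmulcoeff N, ← Finset.add_sum_erase _ _ hd0in]
      _ = v (φF (coeff d0 (QN N)) * ∏ s ∈ d0.support, gF s ^ d0 s) :=
          v_add_eq hv_ne_bot hv_mul hv_add hv_nontrivial hlt
      _ = (D : EReal) := hdiagval
  have hτzN : τz N = ((a + b : ℝ) : EReal) := by
    simp only [hτz]
    rw [hvalN, ← EReal.coe_mul, ← EReal.coe_add, EReal.coe_eq_coe_iff, hD]
    have hqN : ((p : ℝ) ^ N) ≠ 0 := (hq N).ne'
    field_simp
    ring
  rw [hA, hB, ← EReal.coe_add]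
  apply le_antisymm
  · exact le_trans (iInf_le τz N) (le_of_eq hτzN)
  · exact le_iInf hlower
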